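/- Stationarity of the iterated local-solution times: under assumption [H], define recursively γ₀=0 and γ_n=θ_{γ_{n−1}}, where θ_τ is the stopping time from the local solution BL(ξ,g,L,U) associated with the stopping time τ. Then for every n≥1, P[(γ_{n−1}=γ_n)∩(γ_n<T)]=0, and the sequence (γ_n) is of stationary type, i.e. P[γ_n<T for all n≥1]=0. -/

import Mathlib

open MeasureTheory ProbabilityTheory Filter Set Function
open scoped ENNReal NNReal Classical

noncomputable section

namespace DRBSDE

/-- The mark space `E = ℝ^l \ {0}` of the Poisson random measure. -/
abbrev Marks (l : ℕ) := {x : Fin l → ℝ // x ≠ 0}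

/-- A real function is rcll (right continuous with left limits) on `[0,T]`. -/
def RCLLOn (f : ℝ → ℝ) (T : ℝ) : Prop :=
  (∀ t ∈ Set.Ico (0 : ℝ) T, ContinuousWithinAt f (Set.Ici t) t) ∧
  (∀ t ∈ Set.Ioc (0 : ℝ) T, ∃ c : ℝ, Filter.Tendsto f (nhdsWithin t (Set.Iio t)) (nhds c))

/-- Freeze a path outside of `[0,T]`. -/
def clamp (T : ℝ) (f : ℝ → ℝ) : ℝ → ℝ := fun s => f (max 0 (min s T))

/-- The Lebesgue-Stieltjes measure `dK` associated with a nondecreasing right-continuous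
function (junk value `0` otherwise). -/
def lsMeasure (g : ℝ → ℝ) : Measure ℝ :=
  if h : Monotone g ∧ ∀ x, ContinuousWithinAt g (Set.Ici x) x then
    StieltjesFunction.measure ⟨g, h.1, h.2⟩
  else 0

/-- The jump `Δf_t = f_t - f_{t-}` of a path at time `t`. -/
def jump (f : ℝ → ℝ) (t : ℝ) : ℝ := f t - Function.leftLim f t

/-- The sum of the jumps of a path over `(0,t]`; for an rcll nondecreasing function this is
its purely discontinuous part `K^d`. -/
def jumpPart (f : ℝ → ℝ) (t : ℝ) : ℝ := ∑' s : {s : ℝ // 0 < s ∧ s ≤ t}, jump f s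

/-- The continuous part `K^c = K - K^d` of an rcll nondecreasing function. -/
def contPart (f : ℝ → ℝ) : ℝ → ℝ := fun t => f t - jumpPart f t

/-- The stochastic basis of the paper: a complete right-continuous filtered probability space
on the horizon `[0,T]`, carrying a `d`-dimensional Brownian motion `B` and an independent
Poisson random measure `pm` on `ℝ⁺ × E`, `E = ℝ^l \ {0}`, with compensator `dt λ(de)`,
which together generate the filtration.  It also carries the two stochastic integral
operators `intB Z s t = ∫_s^t Z_r dB_r` and `intN V s t = ∫_s^t ∫_E V_r(e) μ̃(dr,de)`
(with `μ̃ = μ - ν` the compensated measure), characterized by their elementary values,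
the Chasles relation, the martingale property and the Itô isometry. -/
structure Setting (Ω : Type) [mΩ : MeasurableSpace Ω] (d l : ℕ) where
  P : Measure Ω
  instP : IsProbabilityMeasure P
  T : ℝ
  hT : 0 < T
  F : Filtration ℝ mΩ
  /-- usual conditions: right continuity of the filtration -/
  usual_right : ∀ t : ℝ, F t = ⨅ (ε : ℝ) (_ : 0 < ε), F (t + ε)
  /-- usual conditions: `F_t` contains all `P`-null sets -/
  usual_complete : ∀ (t : ℝ) (N : Set Ω), P N = 0 → MeasurableSet[F t] N
  /-- the `d`-dimensional Brownian motion -/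
  B : ℝ → Ω → Fin d → ℝ
  B_zero : ∀ ω, B 0 ω = 0
  B_cont : ∀ ω, Continuous fun t => B t ω
  B_adapted : ∀ t : ℝ, Measurable[F t] (B t)
  B_incr_indep : ∀ s t : ℝ, 0 ≤ s → s ≤ t →
    Indep (MeasurableSpace.comap (fun ω => B t ω - B s ω) inferInstance) (F s) P
  B_incr_gaussian : ∀ (s t : ℝ) (i : Fin d), 0 ≤ s → s ≤ t →
    P.map (fun ω => B t ω i - B s ω i) = gaussianReal 0 (Real.toNNReal (t - s))
  B_coord_indep : ∀ (s t : ℝ) (i j : Fin d), i ≠ j →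
    IndepFun (fun ω => B t ω i - B s ω i) (fun ω => B t ω j - B s ω j) P
  /-- the intensity measure `λ` on the mark space -/
  lam : Measure (Marks l)
  lam_sf : SigmaFinite lam
  lam_int : ∫⁻ e : Marks l, ENNReal.ofReal (min 1 (‖(e : Fin l → ℝ)‖ ^ 2)) ∂lam ≠ ∞
  /-- the Poisson random measure `μ(ω, ·)` on `ℝ⁺ × E` -/
  pm : Ω → Measure (ℝ × Marks l)
  pm_meas : ∀ (A : Set (ℝ × Marks l)), MeasurableSet A → Measurable fun ω => pm ω A
  /-- `μ((a,b] × A)` is Poisson distributed with parameter `(b-a) λ(A)` -/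
  pm_poisson : ∀ (a b : ℝ) (A : Set (Marks l)), 0 ≤ a → a ≤ b → MeasurableSet A →
    lam A ≠ ∞ → ∀ k : ℕ,
      P {ω | pm ω (Set.Ioc a b ×ˢ A) = (k : ℝ≥0∞)} =
        ENNReal.ofReal (Real.exp (-((b - a) * (lam A).toReal)) *
          ((b - a) * (lam A).toReal) ^ k / (Nat.factorial k))
  pm_indep : ∀ (A₁ A₂ : Set (ℝ × Marks l)), MeasurableSet A₁ → MeasurableSet A₂ →
    Disjoint A₁ A₂ → IndepFun (fun ω => pm ω A₁) (fun ω => pm ω A₂) P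
  pm_adapted : ∀ (t : ℝ) (A : Set (Marks l)), MeasurableSet A →
    Measurable[F t] fun ω => pm ω (Set.Ioc 0 t ×ˢ A)
  pm_incr_indep : ∀ (s t : ℝ) (A : Set (Marks l)), 0 ≤ s → s ≤ t → MeasurableSet A →
    Indep (MeasurableSpace.comap (fun ω => pm ω (Set.Ioc s t ×ˢ A)) inferInstance) (F s) P
  /-- mutual independence of the Brownian motion and the Poisson random measure -/
  B_pm_indep : Indep
    (MeasurableSpace.comap (fun ω => fun t => B t ω) MeasurableSpace.pi)
    (MeasurableSpace.comap pm inferInstance) P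
  /-- the filtration is the completed natural filtration of `B` and `μ` -/
  F_generated : ∀ t : ℝ, 0 ≤ t → t ≤ T → F t = MeasurableSpace.generateFrom
    ({s | ∃ u : ℝ, 0 ≤ u ∧ u ≤ t ∧ ∃ A : Set (Fin d → ℝ), MeasurableSet A ∧ s = B u ⁻¹' A} ∪
     {s | ∃ u : ℝ, 0 ≤ u ∧ u ≤ t ∧ ∃ A : Set (Marks l), MeasurableSet A ∧
        ∃ k : ℕ, s = {ω | pm ω (Set.Ioc 0 u ×ˢ A) = (k : ℝ≥0∞)}} ∪
     {s | P s = 0})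
  /-- the Brownian stochastic integral `∫_s^t Z_r dB_r` -/
  intB : (ℝ → Ω → Fin d → ℝ) → ℝ → ℝ → Ω → ℝ
  /-- the compensated Poisson stochastic integral `∫_s^t ∫_E V_r(e) μ̃(dr,de)` -/
  intN : (ℝ → Ω → Marks l → ℝ) → ℝ → ℝ → Ω → ℝ
  intB_chasles : ∀ (Z : ℝ → Ω → Fin d → ℝ) (r s t : ℝ), r ≤ s → s ≤ t →
    ∀ᵐ ω ∂P, intB Z r t ω = intB Z r s ω + intB Z s t ω
  intN_chasles : ∀ (V : ℝ → Ω → Marks l → ℝ) (r s t : ℝ), r ≤ s → s ≤ t →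
    ∀ᵐ ω ∂P, intN V r t ω = intN V r s ω + intN V s t ω
  intB_const : ∀ (z : Fin d → ℝ) (s t : ℝ), ∀ᵐ ω ∂P,
    intB (fun _ _ => z) s t ω = ∑ i, z i * (B t ω i - B s ω i)
  intB_martingale : ∀ Z : ℝ → Ω → Fin d → ℝ, ProgMeasurable F Z →
    (∫⁻ ω, ∫⁻ s in Set.Icc 0 T, ENNReal.ofReal (‖Z s ω‖ ^ 2) ∂volume ∂P ≠ ∞) →
    Martingale (fun t ω => intB Z 0 t ω) F P
  intB_isometry : ∀ Z : ℝ → Ω → Fin d → ℝ, ProgMeasurable F Z →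
    (∫⁻ ω, ∫⁻ s in Set.Icc 0 T, ENNReal.ofReal (‖Z s ω‖ ^ 2) ∂volume ∂P ≠ ∞) →
    ∀ t ∈ Set.Icc 0 T,
      ∫⁻ ω, ENNReal.ofReal ((intB Z 0 t ω) ^ 2) ∂P
        = ∫⁻ ω, ∫⁻ s in Set.Icc 0 t, ENNReal.ofReal (‖Z s ω‖ ^ 2) ∂volume ∂P
  intN_compensated : ∀ (A : Set (Marks l)), MeasurableSet A → lam A ≠ ∞ →
    ∀ s t : ℝ, 0 ≤ s → s ≤ t → ∀ᵐ ω ∂P,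
      intN (fun _ _ e => if e ∈ A then 1 else 0) s t ω
        = (pm ω (Set.Ioc s t ×ˢ A)).toReal - (t - s) * (lam A).toReal
  intN_martingale : ∀ V : ℝ → Ω → Marks l → ℝ,
    (∫⁻ ω, ∫⁻ s in Set.Icc 0 T, ∫⁻ e, ENNReal.ofReal ((V s ω e) ^ 2) ∂lam ∂volume ∂P ≠ ∞) →
    Martingale (fun t ω => intN V 0 t ω) F P
  intN_isometry : ∀ V : ℝ → Ω → Marks l → ℝ,
    (∫⁻ ω, ∫⁻ s in Set.Icc 0 T, ∫⁻ e, ENNReal.ofReal ((V s ω e) ^ 2) ∂lam ∂volume ∂P ≠ ∞) →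
    ∀ t ∈ Set.Icc 0 T,
      ∫⁻ ω, ENNReal.ofReal ((intN V 0 t ω) ^ 2) ∂P
        = ∫⁻ ω, ∫⁻ s in Set.Icc 0 t, ∫⁻ e, ENNReal.ofReal ((V s ω e) ^ 2) ∂lam ∂volume ∂P

variable {Ω : Type} [mΩ : MeasurableSpace Ω] {d l : ℕ}

/-- The predictable σ-algebra `𝒫` on `[0,T] × Ω` (generated by the predictable rectangles). -/
def predSigma (S : Setting Ω d l) : MeasurableSpace (ℝ × Ω) :=
  MeasurableSpace.generateFrom
    ({s | ∃ u v : ℝ, u < v ∧ ∃ A : Set Ω, MeasurableSet[S.F u] A ∧ s = Set.Ioc u v ×ˢ A} ∪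
     {s | ∃ A : Set Ω, MeasurableSet[S.F 0] A ∧ s = ({0} : Set ℝ) ×ˢ A})

/-- `𝒮²` : adapted rcll processes with square-integrable sup over `[0,T]`. -/
def MemS2 (S : Setting Ω d l) (Y : ℝ → Ω → ℝ) : Prop :=
  StronglyAdapted S.F Y ∧
  (∀ᵐ ω ∂S.P, RCLLOn (fun t => Y t ω) S.T) ∧
  ∫⁻ ω, (⨆ t : Set.Icc (0 : ℝ) S.T, ENNReal.ofReal |Y (t : ℝ) ω|) ^ 2 ∂S.P ≠ ∞

/-- `ℋ^{2,d}` : progressively measurable, `dt ⊗ dP`-square-integrable processes. -/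
def MemH2 (S : Setting Ω d l) (Z : ℝ → Ω → Fin d → ℝ) : Prop :=
  ProgMeasurable S.F Z ∧
  ∫⁻ ω, ∫⁻ s in Set.Icc 0 S.T, ENNReal.ofReal (‖Z s ω‖ ^ 2) ∂volume ∂S.P ≠ ∞

/-- `ℋ^d` : progressively measurable processes with `∫_0^T |Z_s|² ds < ∞` a.s. -/
def MemHloc (S : Setting Ω d l) (Z : ℝ → Ω → Fin d → ℝ) : Prop :=
  ProgMeasurable S.F Z ∧
  ∀ᵐ ω ∂S.P, ∫⁻ s in Set.Icc 0 S.T, ENNReal.ofReal (‖Z s ω‖ ^ 2) ∂volume ≠ ∞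

/-- scalar variant of `ℋ^{2,1}` for real-valued coefficients. -/
def MemH21 (S : Setting Ω d l) (g : ℝ → Ω → ℝ) : Prop :=
  ProgMeasurable S.F g ∧
  ∫⁻ ω, ∫⁻ s in Set.Icc 0 S.T, ENNReal.ofReal ((g s ω) ^ 2) ∂volume ∂S.P ≠ ∞

/-- `ℒ²` : predictable ⊗ ℰ-measurable random fields, square-integrable w.r.t.
`dt ⊗ dP ⊗ dλ`. -/
def MemL2 (S : Setting Ω d l) (V : ℝ → Ω → Marks l → ℝ) : Prop :=
  Measurable[(predSigma S).prod inferInstance]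
    (fun p : (ℝ × Ω) × Marks l => V p.1.1 p.1.2 p.2) ∧
  ∫⁻ ω, ∫⁻ s in Set.Icc 0 S.T, ∫⁻ e, ENNReal.ofReal ((V s ω e) ^ 2) ∂S.lam ∂volume ∂S.P ≠ ∞

/-- `ℒ` : predictable ⊗ ℰ-measurable random fields with a.s. finite `dt ⊗ dλ` square norm. -/
def MemLloc (S : Setting Ω d l) (V : ℝ → Ω → Marks l → ℝ) : Prop :=
  Measurable[(predSigma S).prod inferInstance]
    (fun p : (ℝ × Ω) × Marks l => V p.1.1 p.1.2 p.2) ∧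
  ∀ᵐ ω ∂S.P, ∫⁻ s in Set.Icc 0 S.T, ∫⁻ e, ENNReal.ofReal ((V s ω e) ^ 2) ∂S.lam ∂volume ≠ ∞

/-- `𝒜` : predictable rcll nondecreasing processes starting from 0 (a.s. finite at `T`). -/
def MemA (S : Setting Ω d l) (K : ℝ → Ω → ℝ) : Prop :=
  Measurable[predSigma S] (fun p : ℝ × Ω => K p.1 p.2) ∧
  ∀ᵐ ω ∂S.P, RCLLOn (fun t => K t ω) S.T ∧ K 0 ω = 0 ∧
    MonotoneOn (fun t => K t ω) (Set.Icc 0 S.T)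

/-- `𝒜²` : processes of `𝒜` with `E[K_T²] < ∞`. -/
def MemA2 (S : Setting Ω d l) (K : ℝ → Ω → ℝ) : Prop :=
  MemA S K ∧ ∫⁻ ω, ENNReal.ofReal ((K S.T ω) ^ 2) ∂S.P ≠ ∞

/-- A square-integrable `F_T`-measurable terminal condition. -/
def IsTerminal (S : Setting Ω d l) (ξ : Ω → ℝ) : Prop :=
  Measurable[S.F S.T] ξ ∧ ∫⁻ ω, ENNReal.ofReal ((ξ ω) ^ 2) ∂S.P ≠ ∞

/-- A uniformly Lipschitz generator `f(t,ω,y,z,v)` with `f(·,·,0,0,0) ∈ ℋ^{2,1}`. -/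
def IsLipschitzGenerator (S : Setting Ω d l)
    (f : ℝ → Ω → ℝ → (Fin d → ℝ) → (Marks l → ℝ) → ℝ) : Prop :=
  (∀ (y : ℝ) (z : Fin d → ℝ) (v : Marks l → ℝ),
      ProgMeasurable S.F (fun t ω => f t ω y z v)) ∧
  (∫⁻ ω, ∫⁻ s in Set.Icc 0 S.T, ENNReal.ofReal ((f s ω 0 0 0) ^ 2) ∂volume ∂S.P ≠ ∞) ∧
  ∃ C : ℝ, ∀ t ω y y' z z' v v',
    |f t ω y z v - f t ω y' z' v'| ≤
      C * (|y - y'| + ‖z - z'‖ + (eLpNorm (fun e => v e - v' e) 2 S.lam).toReal)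

/-- Barrier data for the doubly reflected equation: `L, U ∈ 𝒮²`, `L ≤ U` and
`L_T ≤ ξ ≤ U_T`. -/
def BarrierData (S : Setting Ω d l) (ξ : Ω → ℝ) (L U : ℝ → Ω → ℝ) : Prop :=
  MemS2 S L ∧ MemS2 S U ∧
  (∀ᵐ ω ∂S.P, ∀ t ∈ Set.Icc 0 S.T, L t ω ≤ U t ω) ∧
  (∀ᵐ ω ∂S.P, L S.T ω ≤ ξ ω ∧ ξ ω ≤ U S.T ω)

/-- Assumption [H] : the barriers and their left limits are completely separated. -/
def CompletelySeparated (S : Setting Ω d l) (L U : ℝ → Ω → ℝ) : Prop :=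
  ∀ᵐ ω ∂S.P, ∀ t ∈ Set.Icc 0 S.T, L t ω < U t ω ∧
    Function.leftLim (clamp S.T (fun r => L r ω)) t
      < Function.leftLim (clamp S.T (fun r => U r ω)) t

/-- Solution of the doubly reflected BSDE (2.2) associated with `(f,ξ,L,U)`. -/
structure IsDRSolution (S : Setting Ω d l)
    (f : ℝ → Ω → ℝ → (Fin d → ℝ) → (Marks l → ℝ) → ℝ)
    (ξ : Ω → ℝ) (L U : ℝ → Ω → ℝ)
    (Y : ℝ → Ω → ℝ) (Z : ℝ → Ω → Fin d → ℝ) (V : ℝ → Ω → Marks l → ℝ)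
    (Kp Km : ℝ → Ω → ℝ) : Prop where
  regY : MemS2 S Y
  regZ : MemHloc S Z
  regV : MemLloc S V
  regKp : MemA S Kp
  regKm : MemA S Km
  eqn : ∀ᵐ ω ∂S.P, ∀ t ∈ Set.Icc 0 S.T,
    Y t ω = ξ ω + (∫ s in Set.Icc t S.T, f s ω (Y s ω) (Z s ω) (V s ω))
      + (Kp S.T ω - Kp t ω) - (Km S.T ω - Km t ω)
      - S.intB Z t S.T ω - S.intN V t S.T ω
  barriers : ∀ᵐ ω ∂S.P, ∀ t ∈ Set.Icc 0 S.T, L t ω ≤ Y t ω ∧ Y t ω ≤ U t ω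
  skorokhod_plus : ∀ᵐ ω ∂S.P,
    ∫⁻ t in Set.Icc 0 S.T, ENNReal.ofReal (Y t ω - L t ω)
      ∂(lsMeasure (contPart (clamp S.T (fun r => Kp r ω)))) = 0
  skorokhod_minus : ∀ᵐ ω ∂S.P,
    ∫⁻ t in Set.Icc 0 S.T, ENNReal.ofReal (U t ω - Y t ω)
      ∂(lsMeasure (contPart (clamp S.T (fun r => Km r ω)))) = 0
  jumps_plus : ∀ᵐ ω ∂S.P, ∀ t ∈ Set.Icc 0 S.T,
    jumpPart (clamp S.T (fun r => Kp r ω)) t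
      = ∑' s : {s : ℝ // 0 < s ∧ s ≤ t},
          if jump (clamp S.T (fun r => L r ω)) (s : ℝ) < 0 then
            max (Function.leftLim (clamp S.T (fun r => L r ω)) (s : ℝ) - Y (s : ℝ) ω) 0
          else 0
  jumps_minus : ∀ᵐ ω ∂S.P, ∀ t ∈ Set.Icc 0 S.T,
    jumpPart (clamp S.T (fun r => Km r ω)) t
      = ∑' s : {s : ℝ // 0 < s ∧ s ≤ t},
          if 0 < jump (clamp S.T (fun r => U r ω)) (s : ℝ) then
            max (Y (s : ℝ) ω - Function.leftLim (clamp S.T (fun r => U r ω)) (s : ℝ)) 0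
          else 0

/-- Solution of the BSDE with one reflecting rcll upper barrier (2.3)
associated with `(f,ξ,U)`. -/
structure IsUpperSolution (S : Setting Ω d l)
    (f : ℝ → Ω → ℝ → (Fin d → ℝ) → (Marks l → ℝ) → ℝ)
    (ξ : Ω → ℝ) (U : ℝ → Ω → ℝ)
    (Y : ℝ → Ω → ℝ) (Z : ℝ → Ω → Fin d → ℝ) (V : ℝ → Ω → Marks l → ℝ)
    (K : ℝ → Ω → ℝ) : Prop where
  regY : MemS2 S Y
  regZ : MemH2 S Z
  regV : MemL2 S V
  regK : MemA2 S K
  eqn : ∀ᵐ ω ∂S.P, ∀ t ∈ Set.Icc 0 S.T,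
    Y t ω = ξ ω + (∫ s in Set.Icc t S.T, f s ω (Y s ω) (Z s ω) (V s ω))
      - (K S.T ω - K t ω) - S.intB Z t S.T ω - S.intN V t S.T ω
  barrier : ∀ᵐ ω ∂S.P, ∀ t ∈ Set.Icc 0 S.T, Y t ω ≤ U t ω
  skorokhod : ∀ᵐ ω ∂S.P,
    ∫⁻ t in Set.Icc 0 S.T, ENNReal.ofReal (U t ω - Y t ω)
      ∂(lsMeasure (contPart (clamp S.T (fun r => K r ω)))) = 0
  jumps : ∀ᵐ ω ∂S.P, ∀ t ∈ Set.Icc 0 S.T,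
    jump (clamp S.T (fun r => K r ω)) t
      = if 0 < jump (clamp S.T (fun r => U r ω)) t then
          max (Y t ω - Function.leftLim (clamp S.T (fun r => U r ω)) t) 0
        else 0

/-- Solution of the BSDE with one reflecting rcll lower barrier
associated with `(f,ξ,L)`. -/
structure IsLowerSolution (S : Setting Ω d l)
    (f : ℝ → Ω → ℝ → (Fin d → ℝ) → (Marks l → ℝ) → ℝ)
    (ξ : Ω → ℝ) (L : ℝ → Ω → ℝ)
    (Y : ℝ → Ω → ℝ) (Z : ℝ → Ω → Fin d → ℝ) (V : ℝ → Ω → Marks l → ℝ)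
    (K : ℝ → Ω → ℝ) : Prop where
  regY : MemS2 S Y
  regZ : MemH2 S Z
  regV : MemL2 S V
  regK : MemA2 S K
  eqn : ∀ᵐ ω ∂S.P, ∀ t ∈ Set.Icc 0 S.T,
    Y t ω = ξ ω + (∫ s in Set.Icc t S.T, f s ω (Y s ω) (Z s ω) (V s ω))
      + (K S.T ω - K t ω) - S.intB Z t S.T ω - S.intN V t S.T ω
  barrier : ∀ᵐ ω ∂S.P, ∀ t ∈ Set.Icc 0 S.T, L t ω ≤ Y t ω
  skorokhod : ∀ᵐ ω ∂S.P,
    ∫⁻ t in Set.Icc 0 S.T, ENNReal.ofReal (Y t ω - L t ω)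
      ∂(lsMeasure (contPart (clamp S.T (fun r => K r ω)))) = 0
  jumps : ∀ᵐ ω ∂S.P, ∀ t ∈ Set.Icc 0 S.T,
    jump (clamp S.T (fun r => K r ω)) t
      = max (Function.leftLim (clamp S.T (fun r => L r ω)) t - Y t ω) 0

/-- First time after `τ` at which a nondecreasing process `K` increases
(`= T` if it never does): `inf{s ≥ τ : K_s - K_τ > 0} ∧ T`. -/
def firstIncrease (S : Setting Ω d l) (K : ℝ → Ω → ℝ) (τ : Ω → ℝ) (ω : Ω) : ℝ :=
  sInf ({s : ℝ | τ ω ≤ s ∧ K (τ ω) ω < K s ω} ∪ {S.T})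

/-- A process is of class [D] : the family `{X_τ, τ stopping time with values in [0,T]}`
is uniformly integrable. -/
def ClassD (S : Setting Ω d l) (X : ℝ → Ω → ℝ) : Prop :=
  UniformIntegrable
    (fun τ : {τ : Ω → ℝ // IsStoppingTime S.F (fun ω => (τ ω : WithTop ℝ)) ∧ ∀ ω, τ ω ∈ Set.Icc 0 S.T} =>
      fun ω => X (τ.1 ω) ω) 1 S.P

/-- `SN` is the Snell envelope of `X` : the smallest rcll supermartingale of class [D]
dominating `X` on `[0,T]`. -/
def IsSnellEnvelope (S : Setting Ω d l) (X SN : ℝ → Ω → ℝ) : Prop :=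
  Supermartingale SN S.F S.P ∧
  (∀ᵐ ω ∂S.P, RCLLOn (fun t => SN t ω) S.T) ∧ ClassD S SN ∧
  (∀ᵐ ω ∂S.P, ∀ t ∈ Set.Icc 0 S.T, X t ω ≤ SN t ω) ∧
  ∀ W : ℝ → Ω → ℝ, Supermartingale W S.F S.P →
    (∀ᵐ ω ∂S.P, RCLLOn (fun t => W t ω) S.T) → ClassD S W →
    (∀ᵐ ω ∂S.P, ∀ t ∈ Set.Icc 0 S.T, X t ω ≤ W t ω) →
    ∀ᵐ ω ∂S.P, ∀ t ∈ Set.Icc 0 S.T, SN t ω ≤ W t ω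

/-- Uniqueness in the sense of Proposition 2.1 : any two solutions of the doubly
reflected BSDE associated with `(f,ξ,L,U)` have the same `Y`, `Z`, `V` and `K⁺ - K⁻`. -/
def UniqueDRSolution (S : Setting Ω d l)
    (f : ℝ → Ω → ℝ → (Fin d → ℝ) → (Marks l → ℝ) → ℝ)
    (ξ : Ω → ℝ) (L U : ℝ → Ω → ℝ) : Prop :=
  ∀ (Y Y' : ℝ → Ω → ℝ) (Z Z' : ℝ → Ω → Fin d → ℝ) (V V' : ℝ → Ω → Marks l → ℝ)
    (Kp Km Kp' Km' : ℝ → Ω → ℝ),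
    IsDRSolution S f ξ L U Y Z V Kp Km → IsDRSolution S f ξ L U Y' Z' V' Kp' Km' →
      (∀ᵐ ω ∂S.P, ∀ t ∈ Set.Icc 0 S.T,
        Y t ω = Y' t ω ∧ Kp t ω - Km t ω = Kp' t ω - Km' t ω) ∧
      (∀ᵐ ω ∂S.P, ∀ᵐ t ∂(volume.restrict (Set.Icc 0 S.T)),
        Z t ω = Z' t ω ∧ ∀ᵐ e ∂S.lam, V t ω e = V' t ω e)

/-- A generator `f(t,ω,y)` depending only on `y`, uniformly Lipschitz in `y`,
with `f(·,·,0) ∈ ℋ^{2,1}`. -/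
def IsLipschitzGeneratorY (S : Setting Ω d l) (f : ℝ → Ω → ℝ → ℝ) : Prop :=
  (∀ y : ℝ, ProgMeasurable S.F (fun t ω => f t ω y)) ∧
  (∫⁻ ω, ∫⁻ s in Set.Icc 0 S.T, ENNReal.ofReal ((f s ω 0) ^ 2) ∂volume ∂S.P ≠ ∞) ∧
  ∃ C : ℝ, ∀ t ω y y', |f t ω y - f t ω y'| ≤ C * |y - y'|

open scoped Topology

private lemma clamp_eq_self {T : ℝ} (f : ℝ → ℝ) {s : ℝ} (h0 : 0 ≤ s) (hT : s ≤ T) :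
    clamp T f s = f s := by
  unfold clamp; rw [min_eq_left hT, max_eq_right h0]

private lemma tendsto_clamp_left {T t c : ℝ} {f : ℝ → ℝ} (h0 : 0 < t) (hT : t ≤ T)
    (h : Filter.Tendsto f (𝓝[<] t) (𝓝 c)) :
    Filter.Tendsto (clamp T f) (𝓝[<] t) (𝓝 c) := by
  refine h.congr' ?_
  filter_upwards [Ioo_mem_nhdsLT h0] with x hx
  exact (clamp_eq_self f hx.1.le (hx.2.le.trans hT)).symm

private lemma leftLim_eq' {f : ℝ → ℝ} {t c : ℝ}
    (h : Filter.Tendsto f (𝓝[<] t) (𝓝 c)) :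
    Function.leftLim f t = c :=
  leftLim_eq_of_tendsto (h := nhdsLT_neBot t) h

private lemma exists_close_left {f : ℝ → ℝ} {t c a ε : ℝ}
    (h : Filter.Tendsto f (𝓝[<] t) (𝓝 c)) (ha : a < t) (hε : 0 < ε) :
    ∃ u, a < u ∧ u < t ∧ |f u - c| < ε := by
  have h1 : f ⁻¹' Metric.ball c ε ∈ 𝓝[<] t := h (Metric.ball_mem_nhds c hε)
  obtain ⟨w, hw⟩ := Filter.nonempty_of_mem (Filter.inter_mem h1 (Ioo_mem_nhdsLT ha))
  exact ⟨w, hw.2.1, hw.2.2, by simpa [Real.dist_eq] using hw.1⟩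

/-- Stationarity of the iterated local-solution times: under [H], with
`γ₀ = 0` and `γ_n = θ_{γ_{n-1}}` where `θ_τ` is the stopping time of the local solution
`𝓑𝓛(ξ,g,L,U)` (constructed through the intermediate time `δ_τ`, so that `Y` is above
`U - (ΔU)⁺` at `δ_τ` and below `L + (ΔL)⁻` at `θ_τ` before `T`), one has
`P[(γ_{n-1} = γ_n) ∩ (γ_n < T)] = 0` for every `n ≥ 1` and the sequence `(γ_n)` is of
stationary type : `P[γ_n < T, ∀ n ≥ 1] = 0`. -/
theorem gamma_sequence_stationary (S : Setting Ω d l)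
    (g : ℝ → Ω → ℝ) (hg : MemH21 S g)
    (ξ : Ω → ℝ) (hξ : IsTerminal S ξ)
    (L U : ℝ → Ω → ℝ) (hLU : BarrierData S ξ L U)
    (hsep : CompletelySeparated S L U)
    (Y : ℝ → Ω → ℝ)
    (hYprog : ProgMeasurable S.F Y)
    (hYrcll : ∀ᵐ ω ∂S.P, RCLLOn (fun t => Y t ω) S.T)
    (hYT : ∀ᵐ ω ∂S.P, Y S.T ω = ξ ω)
    (hYbar : ∀ᵐ ω ∂S.P, ∀ t ∈ Set.Icc 0 S.T, L t ω ≤ Y t ω ∧ Y t ω ≤ U t ω)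
    (θ δ : (Ω → ℝ) → Ω → ℝ)
    (hBL : ∀ τ : Ω → ℝ, IsStoppingTime S.F (fun ω => (τ ω : WithTop ℝ)) → (∀ ω, τ ω ∈ Set.Icc 0 S.T) →
      IsStoppingTime S.F (fun ω => (θ τ ω : WithTop ℝ)) ∧
      IsStoppingTime S.F (fun ω => (δ τ ω : WithTop ℝ)) ∧
      (∀ ω, τ ω ≤ δ τ ω ∧ δ τ ω ≤ θ τ ω ∧ θ τ ω ≤ S.T) ∧
      (∃ (Zτ : ℝ → Ω → Fin d → ℝ) (Vτ : ℝ → Ω → Marks l → ℝ) (Kp Km : ℝ → Ω → ℝ),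
        MemH2 S Zτ ∧ MemL2 S Vτ ∧ MemA2 S Kp ∧ MemA2 S Km ∧
        (∀ᵐ ω ∂S.P, Kp (τ ω) ω = 0 ∧ Km (τ ω) ω = 0) ∧
        (∀ᵐ ω ∂S.P, ∀ t ∈ Set.Icc (τ ω) (θ τ ω),
          Y t ω = Y (θ τ ω) ω + (∫ s in Set.Icc t (θ τ ω), g s ω)
            + (Kp (θ τ ω) ω - Kp t ω) - (Km (θ τ ω) ω - Km t ω)
            - S.intB Zτ t (θ τ ω) ω - S.intN Vτ t (θ τ ω) ω) ∧
        (∀ᵐ ω ∂S.P,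
          (∫⁻ t in Set.Icc (τ ω) (θ τ ω), ENNReal.ofReal (U t ω - Y t ω)
            ∂(lsMeasure (contPart (clamp S.T (fun r => Km r ω)))) = 0) ∧
          (∫⁻ t in Set.Icc (τ ω) (θ τ ω), ENNReal.ofReal (Y t ω - L t ω)
            ∂(lsMeasure (contPart (clamp S.T (fun r => Kp r ω)))) = 0)) ∧
        (∀ᵐ ω ∂S.P, ∀ t ∈ Set.Icc (τ ω) (θ τ ω),
          jumpPart (clamp S.T (fun r => Kp r ω)) t
            = (∑' s : {s : ℝ // τ ω < s ∧ s ≤ t},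
                max (Function.leftLim (clamp S.T (fun r => L r ω)) (s : ℝ)
                  - Y (s : ℝ) ω) 0) ∧
          jumpPart (clamp S.T (fun r => Km r ω)) t
            = ∑' s : {s : ℝ // τ ω < s ∧ s ≤ t},
                max (Y (s : ℝ) ω
                  - Function.leftLim (clamp S.T (fun r => U r ω)) (s : ℝ)) 0)) ∧
      -- the touching properties of Corollary 3.1 at `δ_τ` and `θ_τ = λ_{δ_τ}`
      (∀ᵐ ω ∂S.P, δ τ ω < S.T →
        U (δ τ ω) ω
          - (if τ ω < δ τ ω then
              max (jump (clamp S.T (fun r => U r ω)) (δ τ ω)) 0 else 0)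
        ≤ Y (δ τ ω) ω) ∧
      (∀ᵐ ω ∂S.P, θ τ ω < S.T →
        Y (θ τ ω) ω ≤ L (θ τ ω) ω
          + (if δ τ ω < θ τ ω then
              max (-(jump (clamp S.T (fun r => L r ω)) (θ τ ω))) 0 else 0)))
    (γ : ℕ → Ω → ℝ) (hγ0 : γ 0 = fun _ => 0) (hγs : ∀ n : ℕ, γ (n + 1) = θ (γ n)) :
    (∀ n : ℕ, S.P {ω | γ n ω = γ (n + 1) ω ∧ γ (n + 1) ω < S.T} = 0) ∧
    S.P {ω | ∀ n : ℕ, 1 ≤ n → γ n ω < S.T} = 0 := by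
  classical
  -- each `γ n` is a stopping time with values in `[0,T]`
  have ST : ∀ n, IsStoppingTime S.F (fun ω => (γ n ω : WithTop ℝ)) ∧ ∀ ω, γ n ω ∈ Set.Icc 0 S.T := by
    intro n
    induction n with
    | zero =>
      refine ⟨?_, ?_⟩
      · rw [hγ0]; exact isStoppingTime_const S.F 0
      · intro ω; rw [hγ0]; exact ⟨le_rfl, S.hT.le⟩
    | succ n ih =>
      have h := hBL (γ n) ih.1 ih.2
      have hb := h.2.2.1
      refine ⟨?_, ?_⟩
      · rw [hγs n]; exact h.1
      · intro ω; rw [hγs n]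
        exact ⟨(ih.2 ω).1.trans ((hb ω).1.trans (hb ω).2.1), (hb ω).2.2⟩
  have hA := fun n => hBL (γ n) (ST n).1 (ST n).2
  have hbd : ∀ n ω, γ n ω ≤ δ (γ n) ω ∧ δ (γ n) ω ≤ γ (n + 1) ω ∧ γ (n + 1) ω ≤ S.T := by
    intro n ω; rw [hγs n]; exact (hA n).2.2.1 ω
  -- the a.e. touching properties along the sequence
  have htch : ∀ᵐ ω ∂S.P, ∀ n,
      (δ (γ n) ω < S.T → U (δ (γ n) ω) ω
          - (if γ n ω < δ (γ n) ω then
              max (jump (clamp S.T (fun r => U r ω)) (δ (γ n) ω)) 0 else 0)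
        ≤ Y (δ (γ n) ω) ω) ∧
      (γ (n + 1) ω < S.T → Y (γ (n + 1) ω) ω ≤ L (γ (n + 1) ω) ω
          + (if δ (γ n) ω < γ (n + 1) ω then
              max (-(jump (clamp S.T (fun r => L r ω)) (γ (n + 1) ω))) 0 else 0)) := by
    rw [MeasureTheory.ae_all_iff]
    intro n
    have h1 := (hA n).2.2.2.2.1
    have h2 := (hA n).2.2.2.2.2
    rw [hγs n]
    exact h1.and h2
  have key : ∀ᵐ ω ∂S.P,
      (∀ n, ¬(γ n ω = γ (n + 1) ω ∧ γ (n + 1) ω < S.T)) ∧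
      ¬(∀ n, 1 ≤ n → γ n ω < S.T) := by
    filter_upwards [hsep, hYrcll, hLU.1.2.1, hLU.2.1.2.1, htch] with ω hsepω hrY hrL hrU htchω
    -- part (a), pointwise
    have pa : ∀ n, ¬(γ n ω = γ (n + 1) ω ∧ γ (n + 1) ω < S.T) := by
      rintro n ⟨heq, hltT⟩
      have hb := hbd n ω
      have hδ : δ (γ n) ω = γ n ω := le_antisymm (by rw [heq]; exact hb.2.1) hb.1
      have h1 := (htchω n).1 (by rw [hδ, heq]; exact hltT)
      have h2 := (htchω n).2 hltT
      rw [hδ] at h1 h2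
      rw [if_neg (lt_irrefl _)] at h1
      rw [← heq] at h2
      rw [if_neg (lt_irrefl _)] at h2
      have hs := (hsepω (γ n ω) ⟨((ST n).2 ω).1, ((ST n).2 ω).2⟩).1
      linarith
    refine ⟨pa, fun hall => ?_⟩
    -- part (b), pointwise
    have hstep : ∀ n, γ n ω ≤ γ (n + 1) ω := fun n => (hbd n ω).1.trans (hbd n ω).2.1
    have hstrict : ∀ n, γ n ω < γ (n + 1) ω := fun n =>
      lt_of_le_of_ne (hstep n) (fun h => pa n ⟨h, hall (n + 1) (Nat.le_add_left 1 n)⟩)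
    have hmono : Monotone fun n => γ n ω := monotone_nat_of_le_succ hstep
    have hγT : ∀ n, γ n ω ≤ S.T := fun n => ((ST n).2 ω).2
    have hbdd : BddAbove (Set.range fun n => γ n ω) := ⟨S.T, by rintro x ⟨n, rfl⟩; exact hγT n⟩
    set t0 : ℝ := ⨆ n, γ n ω with ht0
    have hle : ∀ n, γ n ω ≤ t0 := fun n => le_ciSup hbdd n
    have hltt : ∀ n, γ n ω < t0 := fun n => lt_of_lt_of_le (hstrict n) (hle (n + 1))
    have ht0T : t0 ≤ S.T := ciSup_le hγT
    have ht0pos : 0 < t0 := by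
      have h := hltt 0; rw [hγ0] at h; exact h
    have htend : Filter.Tendsto (fun n => γ n ω) Filter.atTop (𝓝 t0) :=
      tendsto_atTop_ciSup hmono hbdd
    obtain ⟨cY, hcY⟩ := hrY.2 t0 ⟨ht0pos, ht0T⟩
    obtain ⟨cL, hcL⟩ := hrL.2 t0 ⟨ht0pos, ht0T⟩
    obtain ⟨cU, hcU⟩ := hrU.2 t0 ⟨ht0pos, ht0T⟩
    have hγpos : ∀ n, 0 < γ (n + 1) ω := by
      intro n
      have h1 : γ 1 ω ≤ γ (n + 1) ω := hmono (Nat.succ_le_succ (Nat.zero_le n))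
      have h0 := hstrict 0; rw [hγ0] at h0
      exact lt_of_lt_of_le h0 h1
    have hd1 : ∀ n, γ (n + 1) ω ≤ δ (γ (n + 1)) ω := fun n => (hbd (n + 1) ω).1
    have hd2 : ∀ n, δ (γ (n + 1)) ω ≤ γ (n + 2) ω := fun n => (hbd (n + 1) ω).2.1
    have hsnlt : ∀ n, γ (n + 2) ω < t0 := fun n => hltt (n + 2)
    have hsnT : ∀ n, γ (n + 2) ω < S.T := fun n => hall (n + 2) (by omega)
    have hdnlt : ∀ n, δ (γ (n + 1)) ω < t0 := fun n => lt_of_le_of_lt (hd2 n) (hsnlt n)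
    -- Claim A : approximate upper bound of `Y` by `L` values near `γ (n+2)`
    have claimA : ∀ n : ℕ, ∃ w, γ (n + 1) ω ≤ w ∧ w < t0 ∧
        Y (γ (n + 2) ω) ω ≤ max (L (γ (n + 2) ω) ω)
          (clamp S.T (fun r => L r ω) w + 1 / ((n : ℝ) + 1)) := by
      intro n
      have hyb := (htchω (n + 1)).2 (hsnT n)
      by_cases hc : δ (γ (n + 1)) ω < γ (n + 2) ω
      · rw [if_pos hc] at hyb
        obtain ⟨c, hc'⟩ := hrL.2 (γ (n + 2) ω) ⟨hγpos (n + 1), hγT (n + 2)⟩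
        have hcc : Filter.Tendsto (clamp S.T (fun r => L r ω)) (𝓝[<] (γ (n + 2) ω)) (𝓝 c) :=
          tendsto_clamp_left (hγpos (n + 1)) (hγT (n + 2)) hc'
        have hll := leftLim_eq' hcc
        obtain ⟨w, hw1, hw2, hw3⟩ := exists_close_left hcc (hstrict (n + 1))
          (show (0 : ℝ) < 1 / ((n : ℝ) + 1) by positivity)
        refine ⟨w, hw1.le, lt_trans hw2 (hsnlt n), ?_⟩
        have hclamp : clamp S.T (fun r => L r ω) (γ (n + 2) ω) = L (γ (n + 2) ω) ω :=
          clamp_eq_self _ (hγpos (n + 1)).le (hγT (n + 2))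
        simp only [jump, hll, hclamp] at hyb
        have habs := abs_lt.1 hw3
        rcases le_total (L (γ (n + 2) ω) ω) c with hlc | hlc
        · rw [max_eq_left (by linarith)] at hyb
          exact le_max_of_le_right (by linarith)
        · rw [max_eq_right (by linarith)] at hyb
          exact le_max_of_le_left (by linarith)
      · rw [if_neg hc] at hyb
        exact ⟨γ (n + 1) ω, le_rfl, hltt (n + 1), le_max_of_le_left (by linarith)⟩
    -- Claim B : approximate lower bound of `Y` by `U` values near `δ (γ (n+1))`
    have claimB : ∀ n : ℕ, ∃ w, γ (n + 1) ω ≤ w ∧ w < t0 ∧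
        min (U (δ (γ (n + 1)) ω) ω)
          (clamp S.T (fun r => U r ω) w - 1 / ((n : ℝ) + 1)) ≤ Y (δ (γ (n + 1)) ω) ω := by
      intro n
      have hyb := (htchω (n + 1)).1 (lt_of_le_of_lt (hd2 n) (hsnT n))
      by_cases hc : γ (n + 1) ω < δ (γ (n + 1)) ω
      · rw [if_pos hc] at hyb
        have hdpos : 0 < δ (γ (n + 1)) ω := lt_of_lt_of_le (hγpos n) (hd1 n)
        have hdT : δ (γ (n + 1)) ω ≤ S.T := (hd2 n).trans (hγT (n + 2))
        obtain ⟨c, hc'⟩ := hrU.2 (δ (γ (n + 1)) ω) ⟨hdpos, hdT⟩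
        have hcc : Filter.Tendsto (clamp S.T (fun r => U r ω)) (𝓝[<] (δ (γ (n + 1)) ω)) (𝓝 c) :=
          tendsto_clamp_left hdpos hdT hc'
        have hll := leftLim_eq' hcc
        obtain ⟨w, hw1, hw2, hw3⟩ := exists_close_left hcc hc
          (show (0 : ℝ) < 1 / ((n : ℝ) + 1) by positivity)
        refine ⟨w, hw1.le, lt_trans hw2 (hdnlt n), ?_⟩
        have hclamp : clamp S.T (fun r => U r ω) (δ (γ (n + 1)) ω) = U (δ (γ (n + 1)) ω) ω :=
          clamp_eq_self _ hdpos.le hdT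
        simp only [jump, hll, hclamp] at hyb
        have habs := abs_lt.1 hw3
        rcases le_total (U (δ (γ (n + 1)) ω) ω) c with hlc | hlc
        · rw [max_eq_right (by linarith)] at hyb
          exact le_trans (min_le_left _ _) (by linarith)
        · rw [max_eq_left (by linarith)] at hyb
          exact le_trans (min_le_right _ _) (by linarith)
      · rw [if_neg hc] at hyb
        exact ⟨γ (n + 1) ω, le_rfl, hltt (n + 1),
          le_trans (min_le_left _ _) (by linarith)⟩
    choose uu hu1 hu2 hu3 using claimA
    choose vv hv1 hv2 hv3 using claimB
    -- limits along sequences converging to `t0` from the left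
    have hseq : ∀ {f : ℝ → ℝ} {c : ℝ}, Filter.Tendsto f (𝓝[<] t0) (𝓝 c) →
        ∀ {s : ℕ → ℝ}, (∀ n, s n < t0) → Filter.Tendsto s Filter.atTop (𝓝 t0) →
        Filter.Tendsto (fun n => f (s n)) Filter.atTop (𝓝 c) := by
      intro f c hf s hs hst
      exact hf.comp (tendsto_nhdsWithin_iff.2 ⟨hst, Filter.Eventually.of_forall hs⟩)
    have htend1 : Filter.Tendsto (fun n => γ (n + 1) ω) Filter.atTop (𝓝 t0) :=
      htend.comp (tendsto_add_atTop_nat 1)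
    have htend2 : Filter.Tendsto (fun n => γ (n + 2) ω) Filter.atTop (𝓝 t0) :=
      htend.comp (tendsto_add_atTop_nat 2)
    have htendd : Filter.Tendsto (fun n => δ (γ (n + 1)) ω) Filter.atTop (𝓝 t0) :=
      tendsto_of_tendsto_of_tendsto_of_le_of_le htend1 htend2 hd1 hd2
    have htendu : Filter.Tendsto uu Filter.atTop (𝓝 t0) :=
      tendsto_of_tendsto_of_tendsto_of_le_of_le htend1 tendsto_const_nhds hu1
        (fun n => (hu2 n).le)
    have htendv : Filter.Tendsto vv Filter.atTop (𝓝 t0) :=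
      tendsto_of_tendsto_of_tendsto_of_le_of_le htend1 tendsto_const_nhds hv1
        (fun n => (hv2 n).le)
    have hcLc : Filter.Tendsto (clamp S.T (fun r => L r ω)) (𝓝[<] t0) (𝓝 cL) :=
      tendsto_clamp_left ht0pos ht0T hcL
    have hcUc : Filter.Tendsto (clamp S.T (fun r => U r ω)) (𝓝[<] t0) (𝓝 cU) :=
      tendsto_clamp_left ht0pos ht0T hcU
    have hone : Filter.Tendsto (fun n : ℕ => 1 / ((n : ℝ) + 1)) Filter.atTop (𝓝 0) :=
      tendsto_one_div_add_atTop_nhds_zero_nat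
    have h1 : cY ≤ cL := by
      have hYlim : Filter.Tendsto (fun n => Y (γ (n + 2) ω) ω) Filter.atTop (𝓝 cY) :=
        hseq hcY hsnlt htend2
      have hRlim : Filter.Tendsto (fun n => max (L (γ (n + 2) ω) ω)
          (clamp S.T (fun r => L r ω) (uu n) + 1 / ((n : ℝ) + 1))) Filter.atTop
          (𝓝 (max cL (cL + 0))) :=
        Filter.Tendsto.max (hseq hcL hsnlt htend2) ((hseq hcLc hu2 htendu).add hone)
      rw [add_zero, max_self] at hRlim
      exact le_of_tendsto_of_tendsto' hYlim hRlim hu3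
    have h2 : cU ≤ cY := by
      have hYlim : Filter.Tendsto (fun n => Y (δ (γ (n + 1)) ω) ω) Filter.atTop (𝓝 cY) :=
        hseq hcY hdnlt htendd
      have hRlim : Filter.Tendsto (fun n => min (U (δ (γ (n + 1)) ω) ω)
          (clamp S.T (fun r => U r ω) (vv n) - 1 / ((n : ℝ) + 1))) Filter.atTop
          (𝓝 (min cU (cU - 0))) :=
        Filter.Tendsto.min (hseq hcU hdnlt htendd) ((hseq hcUc hv2 htendv).sub hone)
      rw [sub_zero, min_self] at hRlim
      exact le_of_tendsto_of_tendsto' hRlim hYlim hv3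
    have hs := (hsepω t0 ⟨ht0pos.le, ht0T⟩).2
    rw [leftLim_eq' hcLc, leftLim_eq' hcUc] at hs
    linarith
  have hnull := (MeasureTheory.ae_iff).mp key
  constructor
  · intro n
    refine measure_mono_null ?_ hnull
    intro ω hω hcon
    exact hcon.1 n hω
  · refine measure_mono_null ?_ hnull
    intro ω hω hcon
    exact hcon.2 hω
end DRBSDE
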